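/- arXiv:2011.14895 — 2 statements merged into one kernel-verified Lean document; each statement's English description precedes it below -/
import Mathlib

section
/- For every x ∈ ℝ^{n_0}, every compatible activation pattern s ∈ S^C(x), every subjective critical index (l,j) ∈ C̃_s(x) and every v ∈ ℝ^{n_0}, it holds that Ã_s(x+v)_{lj} = ⟨v, ṽ_{s,l,j}⟩. -/
/-!
Formalization of the setting of "Deep ReLU Programming" (Hinz & van de Geer).

A feed-forward ReLU network with `L` hidden layers and widths `n 0, …, n (L+1)`
(`n (L+1) = 1` for a real-valued network) is encoded by the structure `Net L n`
below, where `W k : Matrix (Fin (n (k+1))) (Fin (n k)) ℝ` and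
`b k : Fin (n (k+1)) → ℝ` are the weight matrix and bias vector of layer `k+1`
(so the paper's `W_l, b_l` correspond to `W (l-1), b (l-1)` here).

A neuron `(l, j)` of the paper (layer `l ∈ {1, …, L}`, neuron `j`) is encoded as
the pair `⟨k, j⟩ : Idx n` with `k = l - 1`; membership in the index set `I`
corresponds to the condition `k < L`.
-/

noncomputable section
open Metric Filter Topology
open scoped Classical RealInnerProductSpace BigOperators

namespace DRLP

/-- Input space `ℝ^{n 0}` with the Euclidean metric and inner product. -/
abbrev Input (n : ℕ → ℕ) := EuclideanSpace ℝ (Fin (n 0))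

/-- Patterns: one real number for each neuron `⟨k, j⟩` (neuron `j` of layer `k+1`). -/
abbrev Pat (n : ℕ → ℕ) := ∀ k : ℕ, Fin (n (k+1)) → ℝ

/-- Neuron indices: `⟨k, j⟩` denotes neuron `j` of layer `k+1`. -/
abbrev Idx (n : ℕ → ℕ) := Σ k : ℕ, Fin (n (k+1))

/-- `s` is an activation pattern (element of `S = {0,1}^{n_1} × ⋯ × {0,1}^{n_L}`). -/
def IsPattern (L : ℕ) {n : ℕ → ℕ} (s : Pat n) : Prop :=
  ∀ k < L, ∀ j, s k j = 0 ∨ s k j = 1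

/-- Compatibility of a (hyperplane) pattern `h` with an activation pattern `s`:
`h_{lj} (s_{lj} - 0.5) ≥ 0` for all neurons `(l,j) ∈ I`. -/
def PatCompatible (L : ℕ) {n : ℕ → ℕ} (h s : Pat n) : Prop :=
  ∀ k < L, ∀ j, h k j * (s k j - 1/2) ≥ 0

/-- A feed-forward ReLU network with `L` hidden layers and widths `n 0, …, n (L+1)`. -/
structure Net (L : ℕ) (n : ℕ → ℕ) : Type where
  W : ∀ k : ℕ, Matrix (Fin (n (k+1))) (Fin (n k)) ℝ
  b : ∀ k : ℕ, Fin (n (k+1)) → ℝ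

namespace Net

variable {L : ℕ} {n : ℕ → ℕ} (N : Net L n)

/-- Output of layer `k` (entrywise ReLU applied); layer `0` is the input itself. -/
def hid (x : Input n) : (k : ℕ) → Fin (n k) → ℝ
  | 0 => fun i => x i
  | k + 1 => fun j => max ((N.W k).mulVec (hid x k) j + N.b k j) 0

/-- The ReLU arguments `A(x)`: pre-activation of neuron `j` in layer `k+1`. -/
def preact (x : Input n) (k : ℕ) (j : Fin (n (k+1))) : ℝ :=
  (N.W k).mulVec (N.hid x k) j + N.b k j

/-- The hyperplane pattern `H(x) = sign.(A(x))`. -/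
def Hpat (x : Input n) (k : ℕ) (j : Fin (n (k+1))) : ℝ :=
  Real.sign (N.preact x k j)

/-- Subjective hidden layers: activations frozen to the pattern `s`. -/
def shid (s : Pat n) (x : Input n) : (k : ℕ) → Fin (n k) → ℝ
  | 0 => fun i => x i
  | k + 1 => fun j => s k j * ((N.W k).mulVec (shid s x k) j + N.b k j)

/-- The subjective ReLU arguments `Ã_s(x)`. -/
def spreact (s : Pat n) (x : Input n) (k : ℕ) (j : Fin (n (k+1))) : ℝ :=
  (N.W k).mulVec (N.shid s x k) j + N.b k j

/-- The subjective hyperplane pattern `H̃_s(x) = sign.(Ã_s(x))`. -/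
def sHpat (s : Pat n) (x : Input n) (k : ℕ) (j : Fin (n (k+1))) : ℝ :=
  Real.sign (N.spreact s x k j)

/-- `S^C(x)`: activation patterns compatible with the hyperplane pattern `H(x)`. -/
def SC (x : Input n) : Set (Pat n) :=
  {s | IsPattern L s ∧ PatCompatible L (N.Hpat x) s}

/-- `S̃^C(x)`: activation patterns compatible with their own induced subjective
hyperplane pattern `H̃_s(x)`. -/
def SCtilde (x : Input n) : Set (Pat n) :=
  {s | IsPattern L s ∧ PatCompatible L (N.sHpat s x) s}

/-- `C(x)`: critical indices, i.e. neurons whose hyperplane pattern is non-constant in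
every neighbourhood of `x`. -/
def Critical (x : Input n) (p : Idx n) : Prop :=
  p.1 < L ∧ ∀ ε > 0, ∃ y z : Input n, dist y x < ε ∧ dist z x < ε ∧
    N.Hpat y p.1 p.2 ≠ N.Hpat z p.1 p.2

/-- `C̃_s(x)`: subjective critical indices. -/
def sCritical (s : Pat n) (x : Input n) (p : Idx n) : Prop :=
  p.1 < L ∧ ∀ ε > 0, ∃ y z : Input n, dist y x < ε ∧ dist z x < ε ∧
    N.sHpat s y p.1 p.2 ≠ N.sHpat s z p.1 p.2

/-- The critical kernel `Ker^C(x)`. -/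
def KerC (x : Input n) : Set (Input n) :=
  {v | ∃ ε > 0, ∀ t : ℝ, |t| < ε → ∀ p : Idx n, p.1 < L →
    N.Hpat (x + t • v) p.1 p.2 = N.Hpat x p.1 p.2}

/-- The subjective critical kernel `K̃er^C_s(x)`. -/
def sKerC (s : Pat n) (x : Input n) : Set (Input n) :=
  {v | ∃ ε > 0, ∀ t : ℝ, |t| < ε → ∀ p : Idx n, p.1 < L →
    N.sHpat s (x + t • v) p.1 p.2 = N.sHpat s x p.1 p.2}

/-- Critical degrees of freedom `df^C(x) = dim Ker^C(x)`. -/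
def dfC (x : Input n) : ℕ :=
  Module.finrank ℝ (Submodule.span ℝ (N.KerC x))

/-- `x` is a vertex iff `df^C(x) = 0`. -/
def IsVertex (x : Input n) : Prop := N.dfC x = 0

/-- The matrix `W_{k+1} diag(s_k) W_k ⋯ diag(s_1) W_1`. -/
def sMat (s : Pat n) : (k : ℕ) → Matrix (Fin (n (k+1))) (Fin (n 0)) ℝ
  | 0 => N.W 0
  | k + 1 => N.W (k+1) * Matrix.diagonal (s k) * sMat s k

/-- The normal vector `ṽ_{s,l,j}` (transpose of the `j`-th row of
`W_l diag(s_{l-1}) ⋯ diag(s_1) W_1`). -/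
def nvec (s : Pat n) (p : Idx n) : Input n :=
  WithLp.toLp 2 (fun i => N.sMat s p.1 p.2 i)

/-- The oriented normal vector `ũ_{s,l,j}`. -/
def onvec (s : Pat n) (p : Idx n) : Input n :=
  if s p.1 p.2 = 1 then N.nvec s p else -N.nvec s p

/-- The gradient `∇_s = (W_{L+1} diag(s_L) ⋯ diag(s_1) W_1)ᵀ ∈ ℝ^{n_0}`. -/
def grad (h1 : n (L+1) = 1) (s : Pat n) : Input n :=
  N.nvec s ⟨L, Fin.cast h1.symm 0⟩

/-- The (real-valued) network function `f`. -/
def fnet (h1 : n (L+1) = 1) (x : Input n) : ℝ :=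
  N.preact x L (Fin.cast h1.symm 0)

/-- The subjective network function `f̃_s`. -/
def sfnet (h1 : n (L+1) = 1) (s : Pat n) (x : Input n) : ℝ :=
  N.spreact s x L (Fin.cast h1.symm 0)

/-- The feasible directions `D̃_s(x)`. -/
def Dfeas (s : Pat n) (x : Input n) : Set (Input n) :=
  {v | ∃ ε > 0, s ∈ N.SC (x + ε • v)}

/-- `x` is a regular point: for every compatible activation pattern `s ∈ S^C(x)`, the
normal vectors at the subjective critical indices are linearly independent. -/
def RegularPoint (x : Input n) : Prop :=
  ∀ s ∈ N.SC x, LinearIndependent ℝ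
    (fun p : {p : Idx n // N.sCritical s x p} => N.nvec s p.1)

/-- The network is regular if every point is a regular point. -/
def Regular : Prop := ∀ x : Input n, N.RegularPoint x

/-- `w` is the feasible axis `ã_{x,s,l,j}` at `x` for the activation pattern `s` and the
critical index `p = (l,j)`: it pairs to `1` with the oriented normal vector of `p` and
to `0` with the oriented normal vectors of all other critical indices of `x`. -/
def IsAxis (x : Input n) (s : Pat n) (p : Idx n) (w : Input n) : Prop :=
  ∀ q : Idx n, N.Critical x q → ⟪w, N.onvec s q⟫ = if p = q then 1 else 0

/-- The region separating axes `𝒜(x)`. -/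
def RegionSepAxes (x : Input n) : Set (Input n) :=
  {w | ∃ s ∈ N.SC x, ∃ p : Idx n, N.Critical x p ∧ N.IsAxis x s p w}

/-- Auxiliary matrix: `diag(s_k) W_k ⋯ diag(s_1) W_1` (identity for `k = 0`). -/
def auxMat (N : Net L n) (s : Pat n) : (k : ℕ) → Matrix (Fin (n k)) (Fin (n 0)) ℝ
  | 0 => 1
  | k + 1 => Matrix.diagonal (s k) * N.sMat s k

lemma sMat_eq_mul_auxMat (N : Net L n) (s : Pat n) :
    ∀ k, N.sMat s k = N.W k * N.auxMat s k
  | 0 => by simp [sMat, auxMat]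
  | k + 1 => by
      simp [sMat, auxMat, Matrix.mul_assoc]

lemma shid_add (N : Net L n) (s : Pat n) (x v : Input n) :
    ∀ k, N.shid s (x + v) k = fun i => N.shid s x k i + (N.auxMat s k).mulVec v i := by
  intro k
  induction k with
  | zero =>
    funext i
    simp [shid, auxMat, Matrix.one_mulVec]
  | succ k ih =>
    funext j
    have hd : (N.auxMat s (k+1)).mulVec v j = s k j * (N.sMat s k).mulVec v j := by
      simp [auxMat, ← Matrix.mulVec_mulVec, Matrix.mulVec_diagonal]
    simp only [shid, ih, hd]
    have : (N.W k).mulVec (fun i => N.shid s x k i + (N.auxMat s k).mulVec v i) j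
        = (N.W k).mulVec (N.shid s x k) j + (N.W k).mulVec ((N.auxMat s k).mulVec v) j := by
      have := Matrix.mulVec_add (N.W k) (N.shid s x k) ((N.auxMat s k).mulVec v)
      exact congrFun this j
    rw [this, Matrix.mulVec_mulVec, ← N.sMat_eq_mul_auxMat s k]
    ring

lemma spreact_add (N : Net L n) (s : Pat n) (x v : Input n) (k : ℕ) (j : Fin (n (k+1))) :
    N.spreact s (x + v) k j = N.spreact s x k j + (N.sMat s k).mulVec v j := by
  simp only [spreact, N.shid_add s x v k]
  have : (N.W k).mulVec (fun i => N.shid s x k i + (N.auxMat s k).mulVec v i) j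
      = (N.W k).mulVec (N.shid s x k) j + (N.W k).mulVec ((N.auxMat s k).mulVec v) j := by
    have := Matrix.mulVec_add (N.W k) (N.shid s x k) ((N.auxMat s k).mulVec v)
    exact congrFun this j
  rw [this, Matrix.mulVec_mulVec, ← N.sMat_eq_mul_auxMat s k]
  ring

lemma spreact_eq_zero_of_sCritical (N : Net L n) (s : Pat n) (x : Input n)
    (p : Idx n) (hp : N.sCritical s x p) : N.spreact s x p.1 p.2 = 0 := by
  by_contra h
  set c : ℝ := N.spreact s x p.1 p.2 with hc
  have hcont : Continuous fun y : Input n => N.spreact s y p.1 p.2 := by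
    have heq : (fun y : Input n => N.spreact s y p.1 p.2)
        = fun y : Input n => c + (N.sMat s p.1).mulVec (fun i => y i - x i) p.2 := by
      funext y
      have hxy : x + (show Input n from WithLp.toLp 2 (fun i => y i - x i)) = y := by
        ext i
        simp [PiLp.add_apply]
      have := N.spreact_add s x (show Input n from WithLp.toLp 2 (fun i => y i - x i)) p.1 p.2
      rw [hxy] at this
      exact this
    rw [heq]
    apply continuous_const.add
    unfold Matrix.mulVec dotProduct
    apply continuous_finset_sum
    intro i _
    exact continuous_const.mul (((EuclideanSpace.proj i :
      EuclideanSpace ℝ (Fin (n 0)) →L[ℝ] ℝ).continuous).sub continuous_const)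
  obtain ⟨δ, hδ, hball⟩ := Metric.continuous_iff.mp hcont x |c| (abs_pos.mpr h)
  have hsign : ∀ y : Input n, dist y x < δ → N.sHpat s y p.1 p.2 = Real.sign c := by
    intro y hy
    have hdy := hball y hy
    rw [Real.dist_eq] at hdy
    rcases lt_or_gt_of_ne h with hneg | hpos
    · have : N.spreact s y p.1 p.2 < 0 := by
        have := abs_lt.mp hdy
        have h2 : |c| = -c := abs_of_neg hneg
        linarith [this.2, h2 ▸ this.2]
      rw [sHpat, Real.sign_of_neg this, Real.sign_of_neg hneg]
    · have : 0 < N.spreact s y p.1 p.2 := by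
        have := (abs_lt.mp hdy).1
        have h2 : |c| = c := abs_of_pos hpos
        linarith
      rw [sHpat, Real.sign_of_pos this, Real.sign_of_pos hpos]
  obtain ⟨y, z, hy, hz, hne⟩ := hp.2 δ hδ
  exact hne ((hsign y hy).trans (hsign z hz).symm)

end Net

/-- Lemma 6: for `x`, `s ∈ S^C(x)`, `(l,j) ∈ C̃_s(x)` and `v ∈ ℝ^{n_0}`,
`Ã_s(x+v)_{lj} = ⟨v, ṽ_{s,l,j}⟩`. -/
theorem statement9 {L : ℕ} {n : ℕ → ℕ} (N : Net L n) (x : Input n) (s : Pat n)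
    (hs : s ∈ N.SC x) (p : Idx n) (hp : N.sCritical s x p) (v : Input n) :
    N.spreact s (x + v) p.1 p.2 = ⟪v, N.nvec s p⟫ := by
  rw [N.spreact_add s x v p.1 p.2, N.spreact_eq_zero_of_sCritical s x p hp, zero_add]
  simp only [Matrix.mulVec, dotProduct, Net.nvec, PiLp.inner_apply, PiLp.toLp_apply,
    RCLike.inner_apply, conj_trivial]

end DRLP
end
end

section
/- For every x ∈ ℝ^{n_0}, every activation pattern s ∈ S and every subjective critical index (l,j) ∈ C̃_s(x), the normal vector is non-zero: ṽ_{s,l,j} ≠ 0. -/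
/-!
Formalization of the setting of "Deep ReLU Programming" (Hinz & van de Geer).

A feed-forward ReLU network with `L` hidden layers and widths `n 0, …, n (L+1)`
(`n (L+1) = 1` for a real-valued network) is encoded by the structure `Net L n`
below, where `W k : Matrix (Fin (n (k+1))) (Fin (n k)) ℝ` and
`b k : Fin (n (k+1)) → ℝ` are the weight matrix and bias vector of layer `k+1`
(so the paper's `W_l, b_l` correspond to `W (l-1), b (l-1)` here).

A neuron `(l, j)` of the paper (layer `l ∈ {1, …, L}`, neuron `j`) is encoded as
the pair `⟨k, j⟩ : Idx n` with `k = l - 1`; membership in the index set `I`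
corresponds to the condition `k < L`.
-/

noncomputable section
open Metric Filter Topology
open scoped Classical RealInnerProductSpace BigOperators

namespace DRLP

lemma spreact_affine {L : ℕ} {n : ℕ → ℕ} (N : Net L n) (s : Pat n) :
    ∀ k, ∃ c : Fin (n (k+1)) → ℝ, ∀ (y : Input n) (j : Fin (n (k+1))),
      N.spreact s y k j = (N.sMat s k).mulVec (fun i => y i) j + c j := by
  intro k
  induction k with
  | zero =>
    exact ⟨N.b 0, fun y j => by simp [Net.spreact, Net.shid, Net.sMat]⟩
  | succ k ih =>
    obtain ⟨c, hc⟩ := ih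
    refine ⟨fun j => (N.W (k+1)).mulVec (fun i => s k i * c i) j + N.b (k+1) j, ?_⟩
    intro y j
    have hshid : N.shid s y (k+1) =
        (Matrix.diagonal (s k)).mulVec ((N.sMat s k).mulVec (fun i => y i))
          + fun i => s k i * c i := by
      funext i
      have : N.shid s y (k+1) i = s k i * N.spreact s y k i := rfl
      rw [this, hc y i]
      simp only [Pi.add_apply, mul_add]
      rw [Matrix.mulVec_diagonal]
    show (N.W (k+1)).mulVec (N.shid s y (k+1)) j + N.b (k+1) j = _
    rw [hshid, Matrix.mulVec_add, Matrix.mulVec_mulVec, Matrix.mulVec_mulVec]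
    simp [Net.sMat, Matrix.mul_assoc, add_assoc, Pi.add_apply]

/-- Lemma 7: for every `x`, every activation pattern `s ∈ S` and every
subjective critical index `(l,j) ∈ C̃_s(x)`, the normal vector is non-zero: `ṽ_{s,l,j} ≠ 0`. -/
theorem statement10 {L : ℕ} {n : ℕ → ℕ} (N : Net L n) (x : Input n) (s : Pat n)
    (hS : IsPattern L s) (p : Idx n) (hp : N.sCritical s x p) :
    N.nvec s p ≠ 0 := by
  intro hv
  obtain ⟨hL, hcrit⟩ := hp
  obtain ⟨c, hc⟩ := spreact_affine N s p.1
  have hconst : ∀ y : Input n, N.spreact s y p.1 p.2 = c p.2 := by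
    intro y
    rw [hc y p.2]
    have hrow : ∀ i, N.sMat s p.1 p.2 i = 0 := fun i => by
      simpa [Net.nvec] using congrArg (fun v : Input n => v i) hv
    simp [Matrix.mulVec, dotProduct, hrow]
  obtain ⟨y, z, _, _, hne⟩ := hcrit 1 one_pos
  exact hne (by simp [Net.sHpat, hconst y, hconst z])

end DRLP
end
end
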